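/- arXiv:1005.4884 — 5 statements merged into one kernel-verified Lean document; each statement's English description precedes it below -/
import Mathlib

section
/- Let (M,d) be a proper metric space and r > 0. Let (Pₖ) be a sequence of r-uniformly discrete subsets of M (every open ball of radius r contains at most one point of Pₖ). Suppose P ⊆ M is such that, for every φ : M → ℝ continuous with compact support, ∑_{p ∈ Pₖ} φ(p) → ∑_{p ∈ P} φ(p) as k → ∞. Then for every m ∈ M exactly one of the following holds: (a) for every ε > 0, Pₖ ∩ B_ε(m) ≠ ∅ for all sufficiently large k; or (b) there exists ε > 0 such that Pₖ ∩ B_ε(m) = ∅ for all sufficiently large k. Moreover P equals the set of all m ∈ M satisfying (a). -/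
open Filter Topology

/-- Bump function: 1 on `closedBall m ε`, 0 outside `ball m (2*ε)`, values in `[0,1]`. -/
noncomputable def stmt3Bump {M : Type*} [MetricSpace M] (m : M) (ε : ℝ) : M → ℝ :=
  fun x => max 0 (min 1 (2 - dist m x / ε))

lemma stmt3Bump_continuous {M : Type*} [MetricSpace M] (m : M) (ε : ℝ) :
    Continuous (stmt3Bump m ε) := by
  unfold stmt3Bump
  fun_prop

lemma stmt3Bump_nonneg {M : Type*} [MetricSpace M] (m : M) (ε : ℝ) (x : M) :
    0 ≤ stmt3Bump m ε x := le_max_left _ _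

lemma stmt3Bump_eq_one {M : Type*} [MetricSpace M] {m : M} {ε : ℝ} (hε : 0 < ε) {x : M}
    (h : dist m x ≤ ε) : stmt3Bump m ε x = 1 := by
  have h1 : dist m x / ε ≤ 1 := (div_le_one hε).2 h
  have : (1 : ℝ) ≤ 2 - dist m x / ε := by linarith
  unfold stmt3Bump
  rw [min_eq_left this, max_eq_right zero_le_one]

lemma stmt3Bump_support {M : Type*} [MetricSpace M] {m : M} {ε : ℝ} (hε : 0 < ε) {x : M}
    (h : stmt3Bump m ε x ≠ 0) : dist m x < 2 * ε := by
  by_contra hc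
  push_neg at hc
  have h1 : (2 : ℝ) ≤ dist m x / ε := (le_div_iff₀ hε).2 (by linarith)
  have : min 1 (2 - dist m x / ε) ≤ 0 := le_trans (min_le_right _ _) (by linarith)
  exact h (by unfold stmt3Bump; rw [max_eq_left this])

lemma stmt3Bump_compactSupport {M : Type*} [MetricSpace M] [ProperSpace M] {m : M} {ε : ℝ}
    (hε : 0 < ε) : HasCompactSupport (stmt3Bump m ε) := by
  apply HasCompactSupport.intro (isCompact_closedBall m (2 * ε))
  intro x hx
  by_contra h
  exact hx (Metric.mem_closedBall.2 (by rw [dist_comm]; exact (stmt3Bump_support hε h).le))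

/-- A uniformly discrete set meets a compact set in a finite set. -/
lemma stmt3_ud_finite {M : Type*} [MetricSpace M] {r : ℝ} (hr : 0 < r) {S : Set M}
    (hS : ∀ m : M, (S ∩ Metric.ball m r).Subsingleton) {K : Set M} (hK : IsCompact K) :
    (S ∩ K).Finite := by
  obtain ⟨t, _, hcov⟩ := hK.elim_nhds_subcover (fun x => Metric.ball x r)
    (fun x _ => Metric.ball_mem_nhds x hr)
  have hsub : S ∩ K ⊆ ⋃ x ∈ t, (S ∩ Metric.ball x r) := by
    rintro p ⟨hpS, hpK⟩
    obtain ⟨x, hx, hxp⟩ := Set.mem_iUnion₂.1 (hcov hpK)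
    exact Set.mem_iUnion₂.2 ⟨x, hx, hpS, hxp⟩
  exact (t.finite_toSet.biUnion fun x _ => ((hS x).finite)).subset hsub

theorem stmt_3 {M : Type*} [MetricSpace M] [ProperSpace M] (r : ℝ) (hr : 0 < r)
    (P : ℕ → Set M) (hP : ∀ k, ∀ m : M, (P k ∩ Metric.ball m r).Subsingleton)
    (Q : Set M) (hQ : ∀ m : M, (Q ∩ Metric.ball m r).Subsingleton)
    (hconv : ∀ φ : M → ℝ, Continuous φ → HasCompactSupport φ →
      Tendsto (fun k => ∑ᶠ p ∈ P k, φ p) atTop (𝓝 (∑ᶠ p ∈ Q, φ p))) :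
    (∀ m : M,
      Xor' (∀ ε > 0, ∀ᶠ k in atTop, (P k ∩ Metric.ball m ε).Nonempty)
           (∃ ε > 0, ∀ᶠ k in atTop, P k ∩ Metric.ball m ε = ∅)) ∧
    Q = {m : M | ∀ ε > 0, ∀ᶠ k in atTop, (P k ∩ Metric.ball m ε).Nonempty} := by
  -- (b) implies ¬(a)
  have hBnA : ∀ m : M, (∃ ε > 0, ∀ᶠ k in atTop, P k ∩ Metric.ball m ε = ∅) →
      ¬ (∀ ε > 0, ∀ᶠ k in atTop, (P k ∩ Metric.ball m ε).Nonempty) := by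
    rintro m ⟨ε, hε, hev⟩ ha
    obtain ⟨k, h1, h2⟩ := (hev.and (ha ε hε)).exists
    rw [h1] at h2
    exact Set.not_nonempty_empty h2
  -- If m ∈ Q then (a)
  have hA : ∀ m ∈ Q, ∀ ε > 0, ∀ᶠ k in atTop, (P k ∩ Metric.ball m ε).Nonempty := by
    intro m hm ε hε
    set δ : ℝ := min ε r with hδdef
    have hδ : 0 < δ := lt_min hε hr
    set φ := stmt3Bump m (δ / 3) with hφdef
    have hδ3 : 0 < δ / 3 := by linarith
    have hsupp : ∀ x, φ x ≠ 0 → dist m x < δ := fun x hx => by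
      have := stmt3Bump_support hδ3 hx; linarith
    -- sum over Q is 1
    have hQsum : ∑ᶠ p ∈ Q, φ p = 1 := by
      have hm1 : φ m = 1 := stmt3Bump_eq_one hδ3 (by simp [hδ3.le])
      have hss : Q ∩ Function.support φ = {m} := by
        apply Set.Subset.antisymm
        · rintro p ⟨hpQ, hpφ⟩
          have hpball : p ∈ Metric.ball m r := by
            rw [Metric.mem_ball, dist_comm]
            exact lt_of_lt_of_le (hsupp p hpφ) (min_le_right _ _)
          have hmball : m ∈ Metric.ball m r := Metric.mem_ball_self hr
          exact (hQ m) ⟨hpQ, hpball⟩ ⟨hm, hmball⟩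
        · rintro p rfl
          exact ⟨hm, by rw [Function.mem_support, hm1]; norm_num⟩
      rw [← finsum_mem_inter_support, hss, finsum_mem_singleton, hm1]
    have htend := hconv φ (stmt3Bump_continuous m (δ / 3)) (stmt3Bump_compactSupport hδ3)
    rw [hQsum] at htend
    filter_upwards [htend.eventually (eventually_gt_nhds (by norm_num : (0:ℝ) < 1))] with k hk
    by_contra hempty
    rw [Set.not_nonempty_iff_eq_empty] at hempty
    have : ∑ᶠ p ∈ P k, φ p = 0 := by
      apply finsum_mem_eq_zero_of_forall_eq_zero
      intro p hp
      by_contra hφp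
      have : p ∈ P k ∩ Metric.ball m ε := by
        refine ⟨hp, ?_⟩
        rw [Metric.mem_ball, dist_comm]
        exact lt_of_lt_of_le (hsupp p hφp) (min_le_left _ _)
      rw [hempty] at this
      exact this
    rw [this] at hk
    exact lt_irrefl _ hk
  -- If m ∉ Q then (b)
  have hB : ∀ m ∉ Q, ∃ ε > 0, ∀ᶠ k in atTop, P k ∩ Metric.ball m ε = ∅ := by
    intro m hm
    -- find δ > 0 with Q ∩ ball m δ = ∅
    obtain ⟨δ, hδ, hδr, hQδ⟩ : ∃ δ > 0, δ ≤ r ∧ Q ∩ Metric.ball m δ = ∅ := by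
      by_cases hne : (Q ∩ Metric.ball m r).Nonempty
      · obtain ⟨q, hq⟩ := hne
        have hqm : q ≠ m := fun h => hm (h ▸ hq.1)
        refine ⟨min (dist m q) r, lt_min (by rwa [dist_pos, ne_comm]) hr, min_le_right _ _, ?_⟩
        ext p
        simp only [Set.mem_inter_iff, Metric.mem_ball, Set.mem_empty_iff_false, iff_false]
        rintro ⟨hpQ, hpd⟩
        have hpr : p ∈ Metric.ball m r := by
          rw [Metric.mem_ball]
          exact lt_of_lt_of_le hpd (min_le_right _ _)
        have : p = q := (hQ m) ⟨hpQ, hpr⟩ hq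
        subst this
        rw [dist_comm] at hpd
        exact absurd (lt_of_lt_of_le hpd (min_le_left _ _)) (lt_irrefl _)
      · exact ⟨r, hr, le_refl r, Set.not_nonempty_iff_eq_empty.1 hne⟩
    set φ := stmt3Bump m (δ / 3) with hφdef
    have hδ3 : 0 < δ / 3 := by linarith
    have hsupp : ∀ x, φ x ≠ 0 → dist m x < δ := fun x hx => by
      have := stmt3Bump_support hδ3 hx; linarith
    have hQsum : ∑ᶠ p ∈ Q, φ p = 0 := by
      apply finsum_mem_eq_zero_of_forall_eq_zero
      intro p hp
      by_contra hφp
      have : p ∈ Q ∩ Metric.ball m δ := ⟨hp, by rw [Metric.mem_ball, dist_comm]; exact hsupp p hφp⟩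
      rw [hQδ] at this
      exact this
    have htend := hconv φ (stmt3Bump_continuous m (δ / 3)) (stmt3Bump_compactSupport hδ3)
    rw [hQsum] at htend
    refine ⟨δ / 3, hδ3, ?_⟩
    filter_upwards [htend.eventually (eventually_lt_nhds (by norm_num : (0:ℝ) < 1))] with k hk
    by_contra hne
    rw [← Ne, Set.nonempty_iff_ne_empty.symm] at hne
    obtain ⟨p₀, hp₀P, hp₀b⟩ := hne
    have hφp₀ : φ p₀ = 1 := stmt3Bump_eq_one hδ3 (by rw [dist_comm]; exact (Metric.mem_ball.1 hp₀b).le)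
    -- finiteness of P k ∩ support φ
    have hfin : (P k ∩ Function.support φ).Finite := by
      have hsub : P k ∩ Function.support φ ⊆ P k ∩ Metric.closedBall m δ := by
        rintro p ⟨hp1, hp2⟩
        exact ⟨hp1, Metric.mem_closedBall.2 (by rw [dist_comm]; exact (hsupp p hp2).le)⟩
      exact (stmt3_ud_finite hr (hP k) (isCompact_closedBall m δ)).subset hsub
    have hsum : ∑ᶠ p ∈ P k, φ p = ∑ p ∈ hfin.toFinset, φ p := by
      rw [← finsum_mem_inter_support, finsum_mem_eq_finite_toFinset_sum _ hfin]
    have hp₀mem : p₀ ∈ hfin.toFinset := by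
      rw [Set.Finite.mem_toFinset]
      exact ⟨hp₀P, by rw [Function.mem_support, hφp₀]; norm_num⟩
    have hge : (1 : ℝ) ≤ ∑ᶠ p ∈ P k, φ p := by
      rw [hsum, ← hφp₀]
      exact Finset.single_le_sum (fun p _ => stmt3Bump_nonneg m (δ / 3) p) hp₀mem
    linarith
  constructor
  · intro m
    by_cases hm : m ∈ Q
    · exact Or.inl ⟨hA m hm, fun hb => hBnA m hb (hA m hm)⟩
    · exact Or.inr ⟨hB m hm, hBnA m (hB m hm)⟩
  · ext m
    simp only [Set.mem_setOf_eq]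
    constructor
    · exact hA m
    · intro ha
      by_contra hm
      exact hBnA m (hB m hm) ha
end

section
/- Let (M,d) be a proper metric space and r > 0. Every sequence (Pₙ) of r-uniformly discrete subsets of M has a subsequence (P_{n_k}) and an r-uniformly discrete set P ⊆ M such that for every φ : M → ℝ continuous with compact support, ∑_{p∈P_{n_k}} φ(p) → ∑_{p∈P} φ(p) as k → ∞. (Sequential compactness of the space of r-uniformly discrete point sets in the vague topology.) -/
open Filter Topology Metric Set

private noncomputable def gfn {M : Type*} [MetricSpace M] (S : Set M) (x : M) : ℝ :=
  (min (EMetric.infEdist x S) 1).toReal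

private lemma gfn_nonneg {M : Type*} [MetricSpace M] (S : Set M) (x : M) : 0 ≤ gfn S x :=
  ENNReal.toReal_nonneg

private lemma gfn_le_one {M : Type*} [MetricSpace M] (S : Set M) (x : M) : gfn S x ≤ 1 := by
  have : (min (EMetric.infEdist x S) 1) ≤ 1 := min_le_right _ _
  simpa [gfn] using ENNReal.toReal_mono ENNReal.one_ne_top this

private lemma gfn_le {M : Type*} [MetricSpace M] (S : Set M) (x y : M) :
    gfn S x ≤ gfn S y + dist x y := by
  have h1 : min (EMetric.infEdist x S) 1 ≤ min (EMetric.infEdist y S) 1 + edist x y := by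
    have h2 : min (EMetric.infEdist x S) 1
        ≤ min (EMetric.infEdist y S + edist x y) (1 + edist x y) :=
      le_min (min_le_left _ _ |>.trans EMetric.infEdist_le_infEdist_add_edist)
        ((min_le_right _ _).trans le_self_add)
    simpa [min_add_add_right] using h2
  have hbne : min (EMetric.infEdist y S) 1 ≠ ⊤ :=
    ne_top_of_le_ne_top ENNReal.one_ne_top (min_le_right _ _)
  have hene : edist x y ≠ ⊤ := edist_ne_top x y
  have := ENNReal.toReal_mono (by simp [ENNReal.add_ne_top, hbne, hene]) h1
  rw [ENNReal.toReal_add hbne hene] at this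
  simpa [gfn, dist_edist] using this

private lemma gfn_dist {M : Type*} [MetricSpace M] (S : Set M) (x y : M) :
    |gfn S x - gfn S y| ≤ dist x y := by
  rw [abs_sub_le_iff]
  constructor
  · linarith [gfn_le S x y]
  · have := gfn_le S y x
    rw [dist_comm] at this
    linarith

private lemma gfn_zero_of_mem {M : Type*} [MetricSpace M] {S : Set M} {p : M} (hp : p ∈ S) :
    gfn S p = 0 := by
  simp [gfn, EMetric.infEdist, EMetric.infEdist_zero_of_mem hp]

private lemma gfn_lt {M : Type*} [MetricSpace M] {S : Set M} {x : M} {ε : ℝ}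
    (hε : 0 < ε) (h : gfn S x < min ε 1) : ∃ p ∈ S, dist x p < ε := by
  have hne : min (EMetric.infEdist x S) 1 ≠ ⊤ :=
    ne_top_of_le_ne_top ENNReal.one_ne_top (min_le_right _ _)
  have h1 : min (EMetric.infEdist x S) 1 < ENNReal.ofReal (min ε 1) :=
    (ENNReal.lt_ofReal_iff_toReal_lt hne).2 h
  have h2 : ENNReal.ofReal (min ε 1) ≤ 1 := by
    simpa using ENNReal.ofReal_le_one.2 (min_le_right ε 1)
  have h3 : min (EMetric.infEdist x S) 1 < 1 := lt_of_lt_of_le h1 h2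
  have h4 : EMetric.infEdist x S < 1 := by
    rcases min_lt_iff.1 h3 with h | h
    · exact h
    · exact absurd h (lt_irrefl _)
  have h5 : EMetric.infEdist x S < ENNReal.ofReal ε := by
    have : min (EMetric.infEdist x S) 1 = EMetric.infEdist x S := min_eq_left h4.le
    rw [this] at h1
    exact h1.trans_le (ENNReal.ofReal_le_ofReal (min_le_left _ _))
  obtain ⟨p, hpS, hpe⟩ := EMetric.infEdist_lt_iff.1 h5
  exact ⟨p, hpS, (edist_lt_ofReal).1 hpe⟩

set_option maxHeartbeats 1000000 in
theorem stmt_5 {M : Type*} [MetricSpace M] [ProperSpace M] (r : ℝ) (hr : 0 < r)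
    (P : ℕ → Set M) (hP : ∀ k, ∀ m : M, (P k ∩ Metric.ball m r).Subsingleton) :
    ∃ (σ : ℕ → ℕ) (Q : Set M), StrictMono σ ∧
      (∀ m : M, (Q ∩ Metric.ball m r).Subsingleton) ∧
      ∀ φ : M → ℝ, Continuous φ → HasCompactSupport φ →
        Tendsto (fun k => ∑ᶠ p ∈ P (σ k), φ p) atTop (𝓝 (∑ᶠ p ∈ Q, φ p)) := by
  classical
  rcases isEmpty_or_nonempty M with hM | hM
  · refine ⟨id, ∅, strictMono_id, by simp [Set.Subsingleton], ?_⟩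
    intro φ _ _
    have hPe : ∀ k, P k = ∅ := fun k => Set.eq_empty_of_isEmpty _
    simp only [hPe, finsum_mem_empty, id_eq]
    exact tendsto_const_nhds
  -- dense sequence
  obtain ⟨D, hD⟩ : ∃ D : ℕ → M, DenseRange D :=
    ⟨TopologicalSpace.denseSeq M, TopologicalSpace.denseRange_denseSeq M⟩
  -- sequential compactness extraction
  set F : ℕ → ℕ → Set.Icc (0:ℝ) 1 :=
    fun n i => ⟨gfn (P n) (D i), gfn_nonneg _ _, gfn_le_one _ _⟩ with hF
  obtain ⟨a, σ, hσ, hconv⟩ := SeqCompactSpace.tendsto_subseq F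
  have hDconv : ∀ i, Tendsto (fun k => gfn (P (σ k)) (D i)) atTop (𝓝 ((a i : ℝ))) := by
    intro i
    have h1 : Tendsto (fun k => (F ∘ σ) k i) atTop (𝓝 (a i)) := tendsto_pi_nhds.1 hconv i
    exact (continuous_subtype_val.tendsto _).comp h1
  -- limit function g
  have hcau : ∀ x : M, ∃ l, Tendsto (fun k => gfn (P (σ k)) x) atTop (𝓝 l) := by
    intro x
    apply cauchySeq_tendsto_of_complete
    rw [Metric.cauchySeq_iff]
    intro ε hε
    obtain ⟨i, hi⟩ := hD.exists_dist_lt x (show (0:ℝ) < ε/4 by linarith)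
    obtain ⟨N, hN⟩ := Metric.cauchySeq_iff.1 (hDconv i).cauchySeq (ε/4) (by linarith)
    refine ⟨N, fun m hm n hn => ?_⟩
    have h1 := gfn_dist (P (σ m)) x (D i)
    have h2 := gfn_dist (P (σ n)) x (D i)
    have h3 := hN m hm n hn
    rw [Real.dist_eq] at h3 ⊢
    have t1 : |gfn (P (σ m)) x - gfn (P (σ n)) x| ≤
        |gfn (P (σ m)) x - gfn (P (σ m)) (D i)| +
        |gfn (P (σ m)) (D i) - gfn (P (σ n)) x| := abs_sub_le _ _ _
    have t2 : |gfn (P (σ m)) (D i) - gfn (P (σ n)) x| ≤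
        |gfn (P (σ m)) (D i) - gfn (P (σ n)) (D i)| +
        |gfn (P (σ n)) (D i) - gfn (P (σ n)) x| := abs_sub_le _ _ _
    have h4 : |gfn (P (σ n)) (D i) - gfn (P (σ n)) x| = |gfn (P (σ n)) x - gfn (P (σ n)) (D i)| :=
      abs_sub_comm _ _
    rw [h4] at t2
    linarith
  choose g hg using hcau
  have hgd : ∀ x y, dist (g x) (g y) ≤ dist x y := by
    intro x y
    refine le_of_tendsto ((hg x).dist (hg y)) (Eventually.of_forall fun k => ?_)
    rw [Real.dist_eq]
    exact gfn_dist _ _ _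
  have hgcont : Continuous g := by
    have : LipschitzWith 1 g := LipschitzWith.of_dist_le_mul (by simpa using hgd)
    exact this.continuous
  have hg0 : ∀ x, 0 ≤ g x := fun x =>
    ge_of_tendsto (hg x) (Eventually.of_forall fun k => gfn_nonneg _ _)
  set Q : Set M := {x | g x = 0} with hQdef
  -- Fact A
  have factA : ∀ x ∈ Q, ∀ ε > 0, ∀ᶠ k in atTop, ∃ p ∈ P (σ k), dist x p < ε := by
    intro x hx ε hε
    have h1 : Tendsto (fun k => gfn (P (σ k)) x) atTop (𝓝 0) := by
      have := hg x; rw [show g x = 0 from hx] at this; exact this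
    have h2 : ∀ᶠ k in atTop, gfn (P (σ k)) x < min ε 1 :=
      h1.eventually_lt_const (by positivity)
    exact h2.mono fun k hk => gfn_lt hε hk
  -- uniform discreteness of Q
  have hQdisc : ∀ m : M, (Q ∩ Metric.ball m r).Subsingleton := by
    intro m x hx y hy
    by_contra hxy
    have hxm : dist x m < r := hx.2
    have hym : dist y m < r := hy.2
    have hd : 0 < dist x y := dist_pos.2 hxy
    set ε := min (min (r - dist x m) (r - dist y m)) (dist x y / 2) with hε
    have hεpos : 0 < ε := by
      apply lt_min (lt_min (by linarith) (by linarith)) (by linarith)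
    obtain ⟨k, ⟨p, hpP, hpd⟩, q, hqP, hqd⟩ :=
      ((factA x hx.1 ε hεpos).and (factA y hy.1 ε hεpos)).exists
    have hε1 : ε ≤ r - dist x m := (min_le_left _ _).trans (min_le_left _ _)
    have hε2 : ε ≤ r - dist y m := (min_le_left _ _).trans (min_le_right _ _)
    have hε3 : ε ≤ dist x y / 2 := min_le_right _ _
    have hpm : dist p m < r := by
      have := dist_triangle p x m
      rw [dist_comm p x] at this
      linarith
    have hqm : dist q m < r := by
      have := dist_triangle q y m
      rw [dist_comm q y] at this
      linarith
    have hpq : p = q := hP (σ k) m ⟨hpP, hpm⟩ ⟨hqP, hqm⟩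
    have := dist_triangle x p y
    rw [hpq, dist_comm q y] at this
    rw [hpq] at hpd
    linarith
  -- finiteness on compacts
  have hQfin : ∀ K : Set M, IsCompact K → (Q ∩ K).Finite := by
    intro K hK
    obtain ⟨T, hT⟩ := hK.elim_finite_subcover (fun y : M => Metric.ball y r)
      (fun y => isOpen_ball) (fun x _ => Set.mem_iUnion.2 ⟨x, mem_ball_self hr⟩)
    refine Set.Finite.subset (Set.Finite.biUnion T.finite_toSet
      (fun y _ => (hQdisc y).finite)) ?_
    · intro x hx
      obtain ⟨y, hyT, hyb⟩ := Set.mem_iUnion₂.1 (hT hx.2)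
      exact Set.mem_iUnion₂.2 ⟨y, hyT, hx.1, hyb⟩
  refine ⟨σ, Q, hσ, hQdisc, ?_⟩
  intro φ hφc hφs
  set K : Set M := tsupport φ with hKdef
  have hK : IsCompact K := hφs
  have hFfin : (Q ∩ K).Finite := hQfin K hK
  set Fs : Finset M := hFfin.toFinset with hFs
  -- rewrite the limit sum
  have hsum : ∑ᶠ p ∈ Q, φ p = ∑ q ∈ Fs, φ q := by
    rw [← finsum_mem_coe_finset]
    apply finsum_mem_inter_support_eq
    ext x
    simp only [hFs, Set.mem_inter_iff, Set.Finite.coe_toFinset, Function.mem_support]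
    constructor
    · rintro ⟨hxQ, hxs⟩
      exact ⟨⟨hxQ, subset_tsupport φ hxs⟩, hxs⟩
    · rintro ⟨⟨hxQ, _⟩, hxs⟩
      exact ⟨hxQ, hxs⟩
  rw [hsum]
  rw [Metric.tendsto_atTop]
  intro ε hε
  set m : ℕ := Fs.card with hm
  have hmpos : (0:ℝ) < ε / (m + 1) := by positivity
  obtain ⟨s1, hs1pos, hs1⟩ := Metric.uniformContinuous_iff.1
    (hφs.uniformContinuous_of_continuous hφc) (ε / (m + 1)) hmpos
  set s : ℝ := min s1 (r / 2) with hsdef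
  have hspos : 0 < s := lt_min hs1pos (by linarith)
  have hsr2 : s ≤ r / 2 := min_le_right _ _
  have hsr : s ≤ r := hsr2.trans (by linarith)
  have hss1 : s ≤ s1 := min_le_left _ _
  -- positive lower bound for g away from Q on K
  set C : Set M := K \ ⋃ q ∈ Fs, Metric.ball q s with hCdef
  have hCcomp : IsCompact C := hK.diff (isOpen_biUnion fun q _ => isOpen_ball)
  obtain ⟨δ, hδpos, hδ⟩ : ∃ δ > 0, ∀ x ∈ C, δ ≤ g x := by
    rcases Set.eq_empty_or_nonempty C with h | h
    · exact ⟨1, one_pos, by simp [h]⟩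
    · obtain ⟨x0, hx0, hx0min⟩ := hCcomp.exists_isMinOn h hgcont.continuousOn
      refine ⟨g x0, ?_, fun x hx => hx0min hx⟩
      rcases (hg0 x0).lt_or_eq with h1 | h1
      · exact h1
      · exfalso
        have hx0Q : x0 ∈ Q := h1.symm
        have hx0F : x0 ∈ Fs := hFfin.mem_toFinset.2 ⟨hx0Q, hx0.1⟩
        exact hx0.2 (Set.mem_iUnion₂.2 ⟨x0, hx0F, mem_ball_self hspos⟩)
  -- uniform convergence on K
  have hunif : ∀ᶠ k in atTop, ∀ x ∈ K, |gfn (P (σ k)) x - g x| < δ := by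
    obtain ⟨T, hTfin, hTcov⟩ := totallyBounded_iff.1 hK.totallyBounded (δ / 3) (by linarith)
    have hTev : ∀ᶠ k in atTop, ∀ t ∈ hTfin.toFinset, |gfn (P (σ k)) t - g t| < δ / 3 := by
      rw [eventually_all_finset]
      intro t _
      have h1 := Metric.tendsto_nhds.mp (hg t) (δ / 3) (by linarith)
      exact h1.mono fun k hk => by rw [Real.dist_eq] at hk; exact hk
    refine hTev.mono fun k hk x hx => ?_
    obtain ⟨y, hyT, hyb⟩ := Set.mem_iUnion₂.1 (hTcov hx)
    have hxy : dist x y < δ / 3 := mem_ball.1 hyb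
    have t1 : |gfn (P (σ k)) x - gfn (P (σ k)) y| ≤ dist x y := gfn_dist _ _ _
    have t2 : |gfn (P (σ k)) y - g y| < δ / 3 := hk y (hTfin.mem_toFinset.2 hyT)
    have t3 : |g y - g x| ≤ dist y x := by
      rw [← Real.dist_eq]; exact hgd y x
    rw [dist_comm] at t3
    have u1 : |gfn (P (σ k)) x - g x| ≤
        |gfn (P (σ k)) x - gfn (P (σ k)) y| + |gfn (P (σ k)) y - g x| := abs_sub_le _ _ _
    have u2 : |gfn (P (σ k)) y - g x| ≤
        |gfn (P (σ k)) y - g y| + |g y - g x| := abs_sub_le _ _ _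
    linarith
  -- eventually every q ∈ Fs has a nearby point of P (σ k)
  have hnear : ∀ᶠ k in atTop, ∀ q ∈ Fs, ∃ p ∈ P (σ k), dist q p < s := by
    rw [eventually_all_finset]
    intro q hq
    exact factA q (hFfin.mem_toFinset.1 hq).1 s hspos
  obtain ⟨N, hN⟩ := Filter.eventually_atTop.1 (hunif.and hnear)
  refine ⟨N, fun k hk => ?_⟩
  obtain ⟨hk1, hk2⟩ := hN k hk
  set S : Set M := P (σ k) with hSdef
  choose! pf hpfS hpfd using hk2
  -- Claim 1 : points of S in K lie in the balls around Fs
  have claim1 : ∀ p ∈ S, p ∈ K → ∃ q ∈ Fs, p ∈ Metric.ball q s := by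
    intro p hpS hpK
    by_contra h
    push_neg at h
    have hpC : p ∈ C := by
      refine ⟨hpK, fun hmem => ?_⟩
      obtain ⟨q, hq, hball⟩ := Set.mem_iUnion₂.1 hmem
      exact h q hq hball
    have h1 := hδ p hpC
    have h2 : gfn S p = 0 := gfn_zero_of_mem hpS
    have h3 := hk1 p hpK
    rw [h2] at h3
    rw [abs_sub_comm, sub_zero, abs_of_nonneg (hg0 p)] at h3
    linarith
  -- injectivity of pf on Fs
  have hinj : ∀ q ∈ Fs, ∀ q' ∈ Fs, pf q = pf q' → q = q' := by
    intro q hq q' hq' he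
    have h1 : dist q (pf q) < s := hpfd q hq
    have h2 : dist q' (pf q') < s := hpfd q' hq'
    rw [← he] at h2
    have hqQ : q ∈ Q := (hFfin.mem_toFinset.1 hq).1
    have hq'Q : q' ∈ Q := (hFfin.mem_toFinset.1 hq').1
    have hd : dist q' q < r := by
      have h3 := dist_triangle q' (pf q) q
      have h4 : dist (pf q) q = dist q (pf q) := dist_comm _ _
      linarith
    exact (hQdisc q ⟨hq'Q, mem_ball.2 hd⟩ ⟨hqQ, mem_ball_self hr⟩).symm
  -- compute the sum over S
  have hsum2 : ∑ᶠ p ∈ S, φ p = ∑ q ∈ Fs, φ (pf q) := by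
    rw [← Finset.sum_image hinj, ← finsum_mem_coe_finset]
    apply finsum_mem_inter_support_eq
    ext x
    simp only [Set.mem_inter_iff, Finset.coe_image, Set.mem_image, Finset.mem_coe,
      Function.mem_support]
    constructor
    · rintro ⟨hxS, hxs⟩
      obtain ⟨q, hq, hball⟩ := claim1 x hxS (subset_tsupport φ hxs)
      have hxq : dist x q < s := mem_ball.1 hball
      have hpfq : dist (pf q) q < s := by
        have := hpfd q hq; rw [dist_comm] at this; exact this
      have : x = pf q := hP (σ k) q ⟨hxS, mem_ball.2 (hxq.trans_le hsr)⟩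
        ⟨hpfS q hq, mem_ball.2 (hpfq.trans_le hsr)⟩
      exact ⟨⟨q, hq, this.symm⟩, hxs⟩
    · rintro ⟨⟨q, hq, rfl⟩, hxs⟩
      exact ⟨hpfS q hq, hxs⟩
  rw [hsum2]
  -- final estimate
  have hbound : dist (∑ q ∈ Fs, φ (pf q)) (∑ q ∈ Fs, φ q) ≤ ∑ _q ∈ Fs, ε / (m + 1) := by
    apply dist_sum_sum_le_of_le
    intro q hq
    have h1 : dist (pf q) q < s1 := by
      have := hpfd q hq; rw [dist_comm] at this; exact (this.trans_le hss1)
    exact (hs1 h1).le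
  have hcard : ∑ _q ∈ Fs, ε / (m + 1) = (m : ℝ) * (ε / (m + 1)) := by
    rw [Finset.sum_const, hm, nsmul_eq_mul]
  have hlt : (m : ℝ) * (ε / (m + 1)) < ε := by
    have h1 : (0:ℝ) < (m : ℝ) + 1 := by positivity
    rw [mul_div_assoc', div_lt_iff₀ h1]
    nlinarith
  calc dist (∑ q ∈ Fs, φ (pf q)) (∑ q ∈ Fs, φ q) ≤ ∑ _q ∈ Fs, ε / (m + 1) := hbound
    _ = (m : ℝ) * (ε / (m + 1)) := hcard
    _ < ε := hlt
end

section
/- Let T be a group acting on sets, K ⊆ T, and D, E ⊆ T. Then for any L ⊆ T, L·(∂^K D) ⊆ ∂^{L·K} D ∪ ∂^L D, where ∂^K D := ((K·D) \ int(D)) ∪ ((K·cl(Dᶜ)) \ Dᶜ) with D a subset of the topological group T. -/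
open Pointwise

/-- The van Hove boundary `∂^K D` of a subset `D` of a topological group
with respect to `K`. -/
def vanHoveBoundary {T : Type*} [Group T] [TopologicalSpace T] (K D : Set T) : Set T :=
  ((K * D) \ interior D) ∪ ((K * closure Dᶜ) \ Dᶜ)

theorem stmt_8 {T : Type*} [Group T] [TopologicalSpace T] [IsTopologicalGroup T]
    (K L D : Set T) :
    L * vanHoveBoundary K D ⊆ vanHoveBoundary (L * K) D ∪ vanHoveBoundary L D := by
  rintro _ ⟨l, hl, x, hx, rfl⟩
  rcases hx with ⟨hxKD, hxint⟩ | ⟨hxKc, hxc⟩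
  · by_cases h : l * x ∈ interior D
    · -- x ∉ int D means x ∈ closure Dᶜ, and l*x ∈ D
      right
      right
      refine ⟨⟨l, hl, x, ?_, rfl⟩, ?_⟩
      · rwa [closure_compl, Set.mem_compl_iff]
      · simp only [Set.mem_compl_iff, not_not]
        exact interior_subset h
    · left; left
      refine ⟨?_, h⟩
      rw [mul_assoc]
      exact Set.mul_mem_mul hl hxKD
  · by_cases h : l * x ∈ Dᶜ
    · -- x ∉ Dᶜ means x ∈ D, and l*x ∉ int D
      right
      left
      refine ⟨⟨l, hl, x, by simpa using hxc, rfl⟩, fun hint => h (interior_subset hint : l * x ∈ D)⟩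
    · left; right
      refine ⟨?_, h⟩
      rw [mul_assoc]
      exact Set.mul_mem_mul hl hxKc
end

section
/- Under the same hypotheses, if (Dₙ) is moreover a van Hove sequence, then for every compact K ⊆ T and every relatively compact U ⊆ M, card(P ∩ (∂^K Dₙ)⁻¹·U) = o(vol(Dₙ)) as n → ∞, uniformly in r-uniformly discrete sets P ⊆ M. -/
open Filter Topology Pointwise MeasureTheory
open scoped ENNReal NNReal

/-- A set covered by finitely many balls of radius `r/3`, whose points are pairwise at
distance `≥ r`, is finite with cardinality at most the number of balls. -/
lemma count_of_cover {M : Type*} [MetricSpace M] {r : ℝ} (hr : 0 < r) {Q : Set M}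
    (hsep : ∀ p ∈ Q, ∀ q ∈ Q, dist p q < r → p = q)
    {s : Finset M} (hcov : Q ⊆ ⋃ c ∈ s, Metric.ball c (r / 3)) :
    Q.Finite ∧ Q.ncard ≤ s.card := by
  classical
  have hex : ∀ q ∈ Q, ∃ c ∈ s, q ∈ Metric.ball c (r / 3) := by
    intro q hq
    simpa using hcov hq
  choose! f hf1 hf2 using hex
  have hinj : Set.InjOn f Q := by
    intro p hp q hq he
    apply hsep p hp q hq
    have h1 := Metric.mem_ball.mp (hf2 p hp)
    have h2 := Metric.mem_ball.mp (hf2 q hq)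
    have htri : dist p q ≤ dist p (f p) + dist q (f q) := by
      calc dist p q ≤ dist p (f p) + dist (f p) q := dist_triangle _ _ _
        _ = dist p (f p) + dist q (f q) := by rw [he, dist_comm (f q) q]
    linarith
  have himg : f '' Q ⊆ ↑s := by
    rintro _ ⟨q, hq, rfl⟩
    exact hf1 q hq
  have hfin : Q.Finite := Set.Finite.of_finite_image (s.finite_toSet.subset himg) hinj
  refine ⟨hfin, ?_⟩
  calc Q.ncard = (f '' Q).ncard := (Set.ncard_image_of_injOn hinj).symm
    _ ≤ (↑s : Set M).ncard := Set.ncard_le_ncard himg s.finite_toSet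
    _ = s.card := Set.ncard_coe_finset s

/-- The van Hove boundary is contained in a compact set. -/
lemma vanHoveBoundary_subset {T : Type*} [Group T] [TopologicalSpace T] (K D : Set T) :
    vanHoveBoundary K D ⊆ K * D ∪ D := by
  rintro x (⟨h1, _⟩ | ⟨_, h2⟩)
  · exact Or.inl h1
  · exact Or.inr (by simpa using h2)

/-- Translating the van Hove boundary by a set enlarges it into a boundary for a bigger
compact set. -/
lemma mul_vanHoveBoundary_subset {T : Type*} [Group T] [TopologicalSpace T]
    {K K₀ V D : Set T} (hV : V ⊆ K₀) :
    V * vanHoveBoundary K D ⊆ vanHoveBoundary (K₀ ∪ K₀ * K) D := by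
  rintro t ht
  rw [Set.mem_mul] at ht
  obtain ⟨v, hv, y, hy, rfl⟩ := ht
  rcases hy with ⟨hy1, hy2⟩ | ⟨hy1, hy2⟩
  · by_cases hint : v * y ∈ interior D
    · right
      constructor
      · have hycl : y ∈ closure Dᶜ := by
          rw [closure_compl]
          exact hy2
        exact Set.mul_mem_mul (Set.mem_union_left _ (hV hv)) hycl
      · exact fun hc => hc (interior_subset hint)
    · left
      refine ⟨?_, hint⟩
      rw [Set.mem_mul] at hy1
      obtain ⟨k, hk, d, hd, rfl⟩ := hy1
      have : v * (k * d) = (v * k) * d := (mul_assoc _ _ _).symm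
      rw [this]
      exact Set.mul_mem_mul (Set.mem_union_right _ (Set.mul_mem_mul (hV hv) hk)) hd
  · by_cases hc : v * y ∈ Dᶜ
    · left
      refine ⟨?_, fun hint => hc (interior_subset hint)⟩
      have hyD : y ∈ D := by simpa using hy2
      exact Set.mul_mem_mul (Set.mem_union_left _ (hV hv)) hyD
    · right
      refine ⟨?_, hc⟩
      rw [Set.mem_mul] at hy1
      obtain ⟨k, hk, d, hd, rfl⟩ := hy1
      have : v * (k * d) = (v * k) * d := (mul_assoc _ _ _).symm
      rw [this]
      exact Set.mul_mem_mul (Set.mem_union_right _ (Set.mul_mem_mul (hV hv) hk)) hd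

theorem stmt_16 {T M : Type*} [Group T] [TopologicalSpace T] [IsTopologicalGroup T]
    [LocallyCompactSpace T] [SecondCountableTopology T]
    [MeasurableSpace T] [BorelSpace T]
    [MetricSpace M] [ProperSpace M]
    [MulAction T M] [ContinuousSMul T M]
    (hproper : IsProperMap (fun p : T × M => (p.1 • p.2, p.2)))
    (hiso : ∀ (x : T) (m m' : M), dist (x • m) (x • m') = dist m m')
    (vol : Measure T) [vol.IsHaarMeasure] [vol.IsMulRightInvariant]
    (D : ℕ → Set T)
    (hcomp : ∀ n, IsCompact (D n)) (hne : ∀ n, (D n).Nonempty)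
    (hmono : Monotone D) (hunion : ⋃ n, interior (D n) = Set.univ)
    (hvanHove : ∀ K : Set T, IsCompact K →
      Tendsto (fun n => (vol (vanHoveBoundary K (D n))).toReal / (vol (D n)).toReal)
        atTop (𝓝 0))
    (r : ℝ) (hr : 0 < r)
    (K : Set T) (hK : IsCompact K)
    (U : Set M) (hU : IsCompact (closure U)) :
    ∀ ε > (0 : ℝ), ∀ᶠ n in atTop,
      ∀ P : Set M, (∀ m : M, (P ∩ Metric.ball m r).Subsingleton) →
        ((P ∩ (vanHoveBoundary K (D n))⁻¹ • U).ncard : ℝ) ≤ ε * (vol (D n)).toReal := by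
  classical
  intro ε hε
  -- a compact neighborhood of 1 and its interior
  obtain ⟨K₀, hK₀, hK₀nhds⟩ := exists_compact_mem_nhds (1 : T)
  set V : Set T := interior K₀ with hVdef
  have h1V : (1 : T) ∈ V := mem_interior_iff_mem_nhds.mpr hK₀nhds
  have hVK₀ : V ⊆ K₀ := interior_subset
  have hVopen : IsOpen V := isOpen_interior
  -- the compact target set and its finite cover by small balls
  set C : Set M := K₀ • closure U with hCdef
  have hCcomp : IsCompact C := by
    rw [hCdef, ← Set.image_smul_prod]
    exact (hK₀.prod hU).image continuous_smul
  have hCcov : C ⊆ ⋃ c ∈ C, Metric.ball c (r / 3) := fun c hc =>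
    Set.mem_biUnion hc (Metric.mem_ball_self (by linarith))
  obtain ⟨b, hbC, hbfin, hbcov⟩ :=
    hCcomp.elim_finite_subcover_image (fun c _ => Metric.isOpen_ball) hCcov
  set s : Finset M := hbfin.toFinset with hsdef
  have hscov : C ⊆ ⋃ c ∈ s, Metric.ball c (r / 3) := by
    intro z hz
    have := hbcov hz
    simp only [Set.mem_iUnion] at this ⊢
    obtain ⟨c, hc, hcz⟩ := this
    exact ⟨c, by simpa [hsdef] using hc, hcz⟩
  set N : ℕ := s.card with hNdef
  -- the measure of V
  have hc0 : 0 < vol V := hVopen.measure_pos vol ⟨1, h1V⟩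
  have hcfin : vol V ≠ ⊤ := ne_top_of_le_ne_top hK₀.measure_lt_top.ne (measure_mono hVK₀)
  set creal : ℝ := (vol V).toReal with hcrealdef
  have hcreal : 0 < creal := ENNReal.toReal_pos hc0.ne' hcfin
  -- the bigger compact set
  set K' : Set T := K₀ ∪ K₀ * K with hK'def
  have hK'c : IsCompact K' := hK₀.union (hK₀.mul hK)
  set δ : ℝ := ε * creal / (N + 1) with hδdef
  have hδ : 0 < δ := by positivity
  obtain ⟨n₀, hn₀⟩ : ∃ n₀, (1 : T) ∈ interior (D n₀) := by
    have h : (1 : T) ∈ ⋃ n, interior (D n) := by rw [hunion]; trivial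
    exact Set.mem_iUnion.mp h
  filter_upwards [(hvanHove K' hK'c).eventually_lt_const hδ, eventually_ge_atTop n₀]
    with n hratio hn
  intro P hP
  -- separation
  have hsep : ∀ p ∈ P, ∀ q ∈ P, dist p q < r → p = q := by
    intro p hp q hq hd
    exact ((hP p) ⟨hp, Metric.mem_ball_self hr⟩
      ⟨hq, by rwa [Metric.mem_ball, dist_comm]⟩)
  -- counting points in translates of C
  have hcount : ∀ t : T, (P ∩ t⁻¹ • C).Finite ∧ (P ∩ t⁻¹ • C).ncard ≤ N := by
    intro t
    have hcov2 : P ∩ t⁻¹ • C ⊆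
        ⋃ c ∈ s.image (fun c => t⁻¹ • c), Metric.ball c (r / 3) := by
      rintro p ⟨hpP, hpC⟩
      obtain ⟨m, hm, rfl⟩ := hpC
      obtain ⟨c, hcs, hcball⟩ : ∃ c ∈ s, m ∈ Metric.ball c (r / 3) := by
        simpa using hscov hm
      simp only [Set.mem_iUnion]
      refine ⟨t⁻¹ • c, Finset.mem_image_of_mem _ hcs, ?_⟩
      rw [Metric.mem_ball] at hcball ⊢
      rwa [hiso t⁻¹ m c] 
    have := count_of_cover hr (fun p hp q hq => hsep p hp.1 q hq.1) hcov2
    exact ⟨this.1, this.2.trans (Finset.card_image_le)⟩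
  -- the set we count
  set B : Set T := vanHoveBoundary K (D n) with hBdef
  set F : Set M := P ∩ B⁻¹ • U with hFdef
  -- F is finite
  have hFfin : F.Finite := by
    have hEc : IsCompact ((K * D n ∪ D n)⁻¹ • closure U) := by
      rw [← Set.image_smul_prod]
      exact ((((hK.mul (hcomp n)).union (hcomp n)).inv).prod hU).image continuous_smul
    have hEcov : (K * D n ∪ D n)⁻¹ • closure U ⊆
        ⋃ c ∈ (K * D n ∪ D n)⁻¹ • closure U, Metric.ball c (r / 3) := fun c hc =>
      Set.mem_biUnion hc (Metric.mem_ball_self (by linarith))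
    obtain ⟨b', hb'E, hb'fin, hb'cov⟩ :=
      hEc.elim_finite_subcover_image (fun c _ => Metric.isOpen_ball) hEcov
    have hFsubE : F ⊆ P ∩ (K * D n ∪ D n)⁻¹ • closure U := by
      rintro p ⟨hpP, hpBU⟩
      refine ⟨hpP, Set.smul_subset_smul (Set.inv_subset_inv.mpr (vanHoveBoundary_subset K (D n)))
        subset_closure hpBU⟩
    have hcov3 : P ∩ (K * D n ∪ D n)⁻¹ • closure U ⊆
        ⋃ c ∈ hb'fin.toFinset, Metric.ball c (r / 3) := by
      intro z hz
      have := hb'cov hz.2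
      simp only [Set.mem_iUnion] at this ⊢
      obtain ⟨c, hc, hcz⟩ := this
      exact ⟨c, by simpa using hc, hcz⟩
    exact ((count_of_cover hr (fun p hp q hq => hsep p hp.1 q hq.1) hcov3).1).subset hFsubE
  set Fs : Finset M := hFfin.toFinset with hFsdef
  -- choice of translating elements
  have hxex : ∀ p ∈ F, ∃ x : T, x ∈ B ∧ x • p ∈ U := by
    rintro p ⟨hpP, hpBU⟩
    rw [Set.mem_smul] at hpBU
    obtain ⟨g, hg, u, hu, rfl⟩ := hpBU
    exact ⟨g⁻¹, Set.mem_inv.mp hg, by rwa [inv_smul_smul]⟩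
  choose! x hxB hxU using hxex
  -- the transporter sets
  set A : M → Set T := fun p => (fun y => y * (x p)⁻¹) ⁻¹' V with hAdef
  have hAmeas : ∀ p, MeasurableSet (A p) := fun p =>
    (hVopen.preimage (continuous_mul_right _)).measurableSet
  have hAvol : ∀ p, vol (A p) = vol V := fun p => measure_preimage_mul_right vol _ V
  have hAK' : ∀ p ∈ F, A p ⊆ vanHoveBoundary K' (D n) := by
    intro p hp t ht
    refine mul_vanHoveBoundary_subset hVK₀ ?_
    have hte : t = (t * (x p)⁻¹) * (x p) := by group
    rw [hte]
    exact Set.mul_mem_mul ht (hxB p hp)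
  set S : Set T := toMeasurable vol (vanHoveBoundary K' (D n)) with hSdef
  have hSmeas : MeasurableSet S := measurableSet_toMeasurable vol _
  -- per-point count in terms of the filter
  have hfilter : ∀ t : T, (Fs.filter (fun p => t ∈ A p)).card ≤ N := by
    intro t
    have hsubQ : ↑(Fs.filter (fun p => t ∈ A p)) ⊆ P ∩ t⁻¹ • C := by
      intro p hp
      rw [Finset.mem_coe, Finset.mem_filter] at hp
      obtain ⟨hpFs, hpA⟩ := hp
      have hpF : p ∈ F := hFfin.mem_toFinset.mp hpFs
      refine ⟨hpF.1, ?_⟩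
      have htp : t • p ∈ C := by
        have h1 : t • p = (t * (x p)⁻¹) • ((x p) • p) := by
          rw [smul_smul]
          congr 1
          group
        rw [h1]
        exact Set.smul_mem_smul (hVK₀ hpA) (subset_closure (hxU p hpF))
      have h2 : p = t⁻¹ • (t • p) := (inv_smul_smul t p).symm
      rw [h2]
      exact Set.smul_mem_smul_set htp
    have h3 : (Fs.filter (fun p => t ∈ A p)).card
        = (↑(Fs.filter (fun p => t ∈ A p)) : Set M).ncard :=
      (Set.ncard_coe_finset _).symm
    have h4 : (↑(Fs.filter (fun p => t ∈ A p)) : Set M).ncard ≤ (P ∩ t⁻¹ • C).ncard :=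
      Set.ncard_le_ncard hsubQ (hcount t).1
    exact (h3 ▸ h4).trans (hcount t).2
  -- the main measure estimate
  have hmain : (Fs.card : ℝ≥0∞) * vol V ≤ (N : ℝ≥0∞) * vol (vanHoveBoundary K' (D n)) := by
    have h1 : ∑ p ∈ Fs, vol (A p) = (Fs.card : ℝ≥0∞) * vol V := by
      rw [Finset.sum_congr rfl (fun p _ => hAvol p), Finset.sum_const, nsmul_eq_mul]
    rw [← h1, ← measure_toMeasurable (vanHoveBoundary K' (D n)), ← hSdef]
    calc ∑ p ∈ Fs, vol (A p)
        = ∫⁻ t, ∑ p ∈ Fs, (A p).indicator 1 t ∂vol := by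
          rw [lintegral_finset_sum _ (fun p _ => measurable_one.indicator (hAmeas p))]
          exact Finset.sum_congr rfl fun p _ =>
            ((lintegral_indicator (hAmeas p) 1).trans (setLIntegral_one _)).symm
      _ ≤ ∫⁻ t, (N : ℝ≥0∞) * S.indicator 1 t ∂vol := by
          refine lintegral_mono fun t => ?_
          by_cases htS : t ∈ S
          · rw [Set.indicator_of_mem htS]
            simp only [Pi.one_apply, mul_one]
            have heq : ∑ p ∈ Fs, (A p).indicator 1 t
                = ((Fs.filter (fun p => t ∈ A p)).card : ℝ≥0∞) := by
              rw [Finset.natCast_card_filter]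
              refine Finset.sum_congr rfl fun p _ => ?_
              by_cases h : t ∈ A p
              · simp [Set.indicator_of_mem h, h]
              · simp [Set.indicator_of_notMem h, h]
            rw [heq]
            exact_mod_cast hfilter t
          · have hz : ∀ p ∈ Fs, (A p).indicator (1 : T → ℝ≥0∞) t = 0 := by
              intro p hp
              have hpF : p ∈ F := hFfin.mem_toFinset.mp hp
              refine Set.indicator_of_notMem (fun htA => htS ?_) _
              exact subset_toMeasurable vol _ (hAK' p hpF htA)
            exact le_trans (le_of_eq (Finset.sum_eq_zero hz)) (zero_le)
      _ = (N : ℝ≥0∞) * vol S := by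
          rw [lintegral_const_mul' _ _ (by simp : (N : ℝ≥0∞) ≠ ⊤),
            lintegral_indicator hSmeas]
          simp
  -- boundary measure is finite
  have hbdfin : vol (vanHoveBoundary K' (D n)) ≠ ⊤ :=
    ne_top_of_le_ne_top (((hK'c.mul (hcomp n)).union (hcomp n)).measure_lt_top).ne
      (measure_mono (vanHoveBoundary_subset K' (D n)))
  -- pass to the reals
  have hmainR : (Fs.card : ℝ) * creal
      ≤ (N : ℝ) * (vol (vanHoveBoundary K' (D n))).toReal := by
    have h5 : ((Fs.card : ℝ≥0∞) * vol V).toReal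
        ≤ ((N : ℝ≥0∞) * vol (vanHoveBoundary K' (D n))).toReal :=
      ENNReal.toReal_mono (by simp [ENNReal.mul_ne_top, hbdfin]) hmain
    rwa [ENNReal.toReal_mul, ENNReal.toReal_mul, ENNReal.toReal_natCast,
      ENNReal.toReal_natCast] at h5
  -- positivity of vol (D n)
  have hDpos : 0 < (vol (D n)).toReal := by
    refine ENNReal.toReal_pos ?_ (hcomp n).measure_lt_top.ne
    have hle : vol (interior (D n₀)) ≤ vol (D n) :=
      measure_mono (interior_subset.trans (hmono hn))
    exact ((isOpen_interior.measure_pos vol ⟨1, hn₀⟩).trans_le hle).ne'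
  -- the van Hove smallness of the boundary
  have hbd : (vol (vanHoveBoundary K' (D n))).toReal ≤ δ * (vol (D n)).toReal := by
    rw [div_lt_iff₀ hDpos] at hratio
    linarith
  -- conclude
  have hFcard : F.ncard = Fs.card := Set.ncard_eq_toFinset_card F hFfin
  rw [hFdef] at hFcard
  rw [hFcard]
  have hNnonneg : (0 : ℝ) ≤ N := Nat.cast_nonneg N
  have h6 : (Fs.card : ℝ) * creal ≤ (N : ℝ) * (δ * (vol (D n)).toReal) :=
    hmainR.trans (mul_le_mul_of_nonneg_left hbd hNnonneg)
  have h7 : (N : ℝ) * (δ * (vol (D n)).toReal) ≤ ε * (vol (D n)).toReal * creal := by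
    rw [hδdef]
    have hN1 : (0 : ℝ) < N + 1 := by positivity
    have hdiv : (N : ℝ) / (N + 1) ≤ 1 := by
      rw [div_le_one hN1]; linarith
    have hvD : (0 : ℝ) ≤ (vol (D n)).toReal := ENNReal.toReal_nonneg
    have key : (N : ℝ) * (ε * creal / (N + 1)) ≤ ε * creal := by
      rw [mul_div_assoc']
      rw [div_le_iff₀ hN1]
      nlinarith [mul_pos hε hcreal]
    nlinarith [mul_le_mul_of_nonneg_right key hvD]
  have h8 : (Fs.card : ℝ) * creal ≤ ε * (vol (D n)).toReal * creal := h6.trans h7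
  exact le_of_mul_le_mul_right h8 hcreal
end

section
/- Let (M,d) be a proper metric space with a continuous, proper, isometric action of a group T. Fix r > 0 and a relatively compact U ⊆ M. Then there is a constant Γ_U (depending only on U and r) such that for every r-uniformly discrete P ⊆ M, every k ≥ 1, and every compact D ⊆ T, the number of k-point subsets Q ⊆ P for which there exists x ∈ D with x·Q ⊆ U is at most Γ_U^{k-1} · card(P ∩ D⁻¹·U). -/
open Pointwise Metric

private lemma discrete_card_bound {M : Type*} [MetricSpace M]
    {P : Set M} {r : ℝ} (hr : 0 < r)
    (hP : ∀ m : M, (P ∩ Metric.ball m r).Subsingleton)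
    (s : Finset M) (A : Set M) (hAP : A ⊆ P)
    (hcov : A ⊆ ⋃ c ∈ s, Metric.ball c (r / 2)) :
    A.Finite ∧ A.ncard ≤ s.card := by
  classical
  set f : M → M := fun a =>
    if h : ∃ c ∈ s, a ∈ ball c (r / 2) then h.choose else a with hfdef
  have hf : ∀ a ∈ A, f a ∈ s ∧ a ∈ ball (f a) (r / 2) := by
    intro a ha
    have h : ∃ c ∈ s, a ∈ ball c (r / 2) := by simpa using hcov ha
    simp only [hfdef, dif_pos h]
    exact ⟨h.choose_spec.1, h.choose_spec.2⟩
  have hinj : Set.InjOn f A := by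
    intro a ha b hb hab
    have ha' := hf a ha
    have hb' := hf b hb
    refine hP (f a) ⟨hAP ha, ?_⟩ ⟨hAP hb, ?_⟩
    · exact ball_subset_ball (by linarith) ha'.2
    · rw [hab]; exact ball_subset_ball (by linarith) hb'.2
  have hmaps : ∀ a ∈ A, f a ∈ (s : Set M) := fun a ha => (hf a ha).1
  have hfin : A.Finite := by
    refine Set.Finite.of_finite_image ?_ hinj
    exact s.finite_toSet.subset (by rintro _ ⟨a, ha, rfl⟩; exact hmaps a ha)
  refine ⟨hfin, ?_⟩
  have := Set.ncard_le_ncard_of_injOn f hmaps hinj s.finite_toSet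
  simpa [Set.ncard_coe_finset] using this

theorem stmt_17 {T M : Type*} [Group T] [TopologicalSpace T] [IsTopologicalGroup T]
    [LocallyCompactSpace T] [SecondCountableTopology T]
    [MetricSpace M] [ProperSpace M]
    [MulAction T M] [ContinuousSMul T M]
    (hproper : IsProperMap (fun p : T × M => (p.1 • p.2, p.2)))
    (hiso : ∀ (x : T) (m m' : M), dist (x • m) (x • m') = dist m m')
    (r : ℝ) (hr : 0 < r)
    (U : Set M) (hU : IsCompact (closure U)) :
    ∃ Γ : ℕ, ∀ P : Set M, (∀ m : M, (P ∩ Metric.ball m r).Subsingleton) →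
      ∀ k : ℕ, 1 ≤ k → ∀ D : Set T, IsCompact D →
        {Q : Set M | Q ⊆ P ∧ Q.ncard = k ∧ ∃ x ∈ D, x • Q ⊆ U}.Finite ∧
        ({Q : Set M | Q ⊆ P ∧ Q.ncard = k ∧ ∃ x ∈ D, x • Q ⊆ U}.ncard : ℕ)
          ≤ Γ ^ (k - 1) * (P ∩ D⁻¹ • U).ncard := by
  classical
  rcases isEmpty_or_nonempty M with hM | hM
  · refine ⟨0, fun P hP k hk D hD => ?_⟩
    have hempty : {Q : Set M | Q ⊆ P ∧ Q.ncard = k ∧ ∃ x ∈ D, x • Q ⊆ U} = ∅ := by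
      ext Q
      simp only [Set.mem_setOf_eq, Set.mem_empty_iff_false, iff_false]
      rintro ⟨-, hQk, -⟩
      have : Q = ∅ := Set.eq_empty_of_isEmpty Q
      rw [this] at hQk
      simp at hQk
      omega
    rw [hempty]
    simp
  -- the compact set of "return times"
  set S : Set T :=
    Prod.fst '' ((fun p : T × M => (p.1 • p.2, p.2)) ⁻¹' ((closure U) ×ˢ (closure U))) with hSdef
  have hS : IsCompact S :=
    (hproper.isCompact_preimage (hU.prod hU)).image continuous_fst
  set K : Set M := S⁻¹ • closure U with hKdef
  have hK : IsCompact K := hS.inv.smul_set hU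
  obtain ⟨t, -, htfin, htcov⟩ := hK.finite_cover_balls (half_pos hr)
  set s₀ : Finset M := htfin.toFinset with hs₀def
  have hs₀cov : K ⊆ ⋃ c ∈ s₀, ball c (r / 2) := by
    intro a ha
    have := htcov ha
    simp only [Set.mem_iUnion] at this ⊢
    obtain ⟨c, hc, hac⟩ := this
    exact ⟨c, by simpa [hs₀def] using hc, hac⟩
  refine ⟨s₀.card, fun P hP k hk D hD => ?_⟩
  set 𝒬 := {Q : Set M | Q ⊆ P ∧ Q.ncard = k ∧ ∃ x ∈ D, x • Q ⊆ U} with h𝒬def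
  set F := P ∩ D⁻¹ • U with hFdef
  -- uniform bound on translates of K
  have bound : ∀ (g : T) (A : Set M), A ⊆ P → A ⊆ g • K →
      A.Finite ∧ A.ncard ≤ s₀.card := by
    intro g A hAP hAK
    have hcov' : A ⊆ ⋃ c ∈ s₀.image (fun c => g • c), ball c (r / 2) := by
      intro a ha
      have hKa : g⁻¹ • a ∈ K := (Set.mem_smul_set_iff_inv_smul_mem).1 (hAK ha)
      have := hs₀cov hKa
      simp only [Set.mem_iUnion] at this
      obtain ⟨c, hc, hac⟩ := this
      refine Set.mem_iUnion₂.2 ⟨g • c, Finset.mem_image_of_mem _ hc, ?_⟩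
      have hdist : dist a (g • c) = dist (g⁻¹ • a) c := by
        have := hiso g⁻¹ a (g • c)
        rw [inv_smul_smul] at this
        exact this.symm
      simpa [mem_ball, hdist] using hac
    obtain ⟨h1, h2⟩ := discrete_card_bound hr hP _ A hAP hcov'
    exact ⟨h1, h2.trans Finset.card_image_le⟩
  -- finiteness of F
  have hFfin : F.Finite := by
    have hDU : IsCompact (D⁻¹ • closure U) := hD.inv.smul_set hU
    obtain ⟨t₁, -, ht₁fin, ht₁cov⟩ := hDU.finite_cover_balls (half_pos hr)
    refine (discrete_card_bound hr hP ht₁fin.toFinset F Set.inter_subset_left ?_).1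
    intro a ha
    have : a ∈ D⁻¹ • closure U :=
      Set.smul_subset_smul_left subset_closure ha.2
    have := ht₁cov this
    simp only [Set.mem_iUnion] at this ⊢
    obtain ⟨c, hc, hac⟩ := this
    exact ⟨c, by simpa using hc, hac⟩
  -- each Q in 𝒬 is contained in F
  have hQF : ∀ Q ∈ 𝒬, Q ⊆ F := by
    rintro Q ⟨hQP, hQk, x, hxD, hxQ⟩ p hp
    refine ⟨hQP hp, ?_⟩
    have hxp : x • p ∈ U := hxQ (Set.smul_mem_smul_set hp)
    have := Set.smul_mem_smul (Set.inv_mem_inv.2 hxD) hxp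
    rwa [inv_smul_smul] at this
  have h𝒬fin : 𝒬.Finite := hFfin.finite_subsets.subset (fun Q hQ => hQF Q hQ)
  refine ⟨h𝒬fin, ?_⟩
  -- key containment lemma
  have key : ∀ (Q : Set M) (x x₀ : T) (q : M), x • Q ⊆ U → q ∈ Q → x₀ • q ∈ U →
      Q ⊆ x₀⁻¹ • K := by
    intro Q x x₀ q hxQ hq hx₀q p hp
    have hs : x * x₀⁻¹ ∈ S := by
      refine ⟨(x * x₀⁻¹, x₀ • q), ?_, rfl⟩
      constructor
      · show (x * x₀⁻¹) • (x₀ • q) ∈ closure U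
        have : (x * x₀⁻¹) • (x₀ • q) = x • q := by
          rw [smul_smul, inv_mul_cancel_right]
        rw [this]
        exact subset_closure (hxQ (Set.smul_mem_smul_set hq))
      · exact subset_closure hx₀q
    rw [Set.mem_smul_set_iff_inv_smul_mem, inv_inv]
    have hxp : x • p ∈ closure U := subset_closure (hxQ (Set.smul_mem_smul_set hp))
    have hmem := Set.smul_mem_smul (Set.inv_mem_inv.2 hs) hxp
    have heq : (x * x₀⁻¹)⁻¹ • (x • p) = x₀ • p := by
      rw [smul_smul, mul_inv_rev, inv_inv, mul_assoc, inv_mul_cancel, mul_one]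
    rwa [heq] at hmem
  -- counting
  set Qfin : Finset (Set M) := h𝒬fin.toFinset with hQfindef
  set Ffin : Finset M := hFfin.toFinset with hFfindef
  set pick : Set M → M := fun Q => if h : Q.Nonempty then h.choose else hM.some with hpickdef
  have hpick : ∀ Q ∈ 𝒬, pick Q ∈ Q := by
    rintro Q ⟨-, hQk, -⟩
    have hne : Q.Nonempty := Set.nonempty_of_ncard_ne_zero (by omega)
    simp only [hpickdef, dif_pos hne]
    exact hne.choose_spec
  have hmapsF : ∀ Q ∈ Qfin, pick Q ∈ Ffin := by
    intro Q hQ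
    have hQ𝒬 : Q ∈ 𝒬 := by simpa [hQfindef] using hQ
    simpa [hFfindef] using hQF Q hQ𝒬 (hpick Q hQ𝒬)
  have hsum := Finset.card_eq_sum_card_fiberwise hmapsF
  -- fiber bound
  have hfiber : ∀ q ∈ Ffin, (Qfin.filter (fun Q => pick Q = q)).card ≤ s₀.card ^ (k - 1) := by
    intro q hq
    have hqF : q ∈ F := by simpa [hFfindef] using hq
    obtain ⟨d, hdD, u, hu, hdu⟩ := Set.mem_smul.1 hqF.2
    have hx₀q : d⁻¹ • q ∈ U := by rw [← hdu, inv_smul_smul]; exact hu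
    set x₀ : T := d⁻¹ with hx₀def
    set C : Set M := P ∩ x₀⁻¹ • K with hCdef
    obtain ⟨hCfin, hCcard⟩ := bound x₀⁻¹ C Set.inter_subset_left Set.inter_subset_right
    set Cfin : Finset M := hCfin.toFinset with hCfindef
    have hCfincard : Cfin.card ≤ s₀.card := by
      rwa [← Set.ncard_eq_toFinset_card C hCfin]
    set g : Set M → Finset M := fun Q => Ffin.filter (fun m => m ∈ Q ∧ m ≠ q) with hgdef
    have hgset : ∀ Q ∈ 𝒬, (g Q : Set M) = Q \ {q} := by
      intro Q hQ𝒬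
      ext m
      simp only [hgdef, Finset.coe_filter, Set.mem_setOf_eq, Finset.mem_coe,
        Set.mem_diff, Set.mem_singleton_iff]
      constructor
      · rintro ⟨-, hmQ, hmq⟩; exact ⟨hmQ, hmq⟩
      · rintro ⟨hmQ, hmq⟩
        exact ⟨by simpa [hFfindef] using hQF Q hQ𝒬 hmQ, hmQ, hmq⟩
    have hmem : ∀ Q ∈ Qfin.filter (fun Q => pick Q = q),
        g Q ∈ (Cfin.erase q).powersetCard (k - 1) := by
      intro Q hQ
      rw [Finset.mem_filter] at hQ
      obtain ⟨hQ1, hQ2⟩ := hQ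
      have hQ𝒬 : Q ∈ 𝒬 := by simpa [hQfindef] using hQ1
      obtain ⟨hQP, hQk, x, hxD, hxQ⟩ := hQ𝒬
      have hQ𝒬' : Q ∈ 𝒬 := ⟨hQP, hQk, x, hxD, hxQ⟩
      have hqQ : q ∈ Q := hQ2 ▸ hpick Q hQ𝒬'
      have hQC : Q ⊆ x₀⁻¹ • K := key Q x x₀ q hxQ hqQ hx₀q
      rw [Finset.mem_powersetCard]
      constructor
      · intro m hm
        simp only [hgdef, Finset.mem_filter] at hm
        obtain ⟨-, hmQ, hmq⟩ := hm
        refine Finset.mem_erase.2 ⟨hmq, ?_⟩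
        simp only [hCfindef, Set.Finite.mem_toFinset, hCdef]
        exact ⟨hQP hmQ, hQC hmQ⟩
      · have hQfinite : Q.Finite := hFfin.subset (hQF Q hQ𝒬')
        have : (g Q).card = (Q \ {q}).ncard := by
          rw [← hgset Q hQ𝒬', Set.ncard_coe_finset]
        rw [this, Set.ncard_diff_singleton_of_mem hqQ, hQk]
    have hinj : Set.InjOn g (Qfin.filter (fun Q => pick Q = q)) := by
      intro Q₁ hQ₁ Q₂ hQ₂ hg
      rw [Finset.coe_filter, Set.mem_setOf_eq] at hQ₁ hQ₂
      have hQ₁𝒬 : Q₁ ∈ 𝒬 := by simpa [hQfindef] using hQ₁.1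
      have hQ₂𝒬 : Q₂ ∈ 𝒬 := by simpa [hQfindef] using hQ₂.1
      have h₁ : Q₁ = insert q (Q₁ \ {q}) := by
        rw [Set.insert_diff_singleton, Set.insert_eq_self.2 (hQ₁.2 ▸ hpick Q₁ hQ₁𝒬)]
      have h₂ : Q₂ = insert q (Q₂ \ {q}) := by
        rw [Set.insert_diff_singleton, Set.insert_eq_self.2 (hQ₂.2 ▸ hpick Q₂ hQ₂𝒬)]
      rw [h₁, h₂, ← hgset Q₁ hQ₁𝒬, ← hgset Q₂ hQ₂𝒬, hg]
    calc (Qfin.filter (fun Q => pick Q = q)).card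
        ≤ ((Cfin.erase q).powersetCard (k - 1)).card :=
          Finset.card_le_card_of_injOn g hmem hinj
      _ = (Cfin.erase q).card.choose (k - 1) := Finset.card_powersetCard _ _
      _ ≤ (Cfin.erase q).card ^ (k - 1) := Nat.choose_le_pow _ _
      _ ≤ s₀.card ^ (k - 1) :=
          Nat.pow_le_pow_left ((Finset.card_erase_le).trans hCfincard) _
  calc 𝒬.ncard = Qfin.card := Set.ncard_eq_toFinset_card 𝒬 h𝒬fin
    _ = ∑ q ∈ Ffin, (Qfin.filter (fun Q => pick Q = q)).card := hsum
    _ ≤ ∑ _q ∈ Ffin, s₀.card ^ (k - 1) := Finset.sum_le_sum hfiber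
    _ = Ffin.card * s₀.card ^ (k - 1) := by rw [Finset.sum_const, smul_eq_mul]
    _ = s₀.card ^ (k - 1) * F.ncard := by
        rw [Set.ncard_eq_toFinset_card F hFfin, mul_comm]
end
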